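/- Let C be an [n, k, n−k] linear code over F_q (an AMDS code) whose dual is also AMDS (so C is NMDS), with 1 ≤ s ≤ k. Then the number A_{n−k+s} of codewords of C of weight n−k+s satisfies A_{n−k+s} = C(n, k−s)·∑_{j=0}^{s−1} (−1)^j C(n−k+s, j)(q^{s−j} − 1) + (−1)^s C(k, s)·A_{n−k}, where C(a,b) denotes the binomial coefficient. -/

import Mathlib

/-- Hamming weight of a word. -/
def codeWt {n : ℕ} {F : Type*} [Zero F] [DecidableEq F] (c : Fin n → F) : ℕ :=
  (Finset.univ.filter (fun i => c i ≠ 0)).card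

/-- Dual code with respect to the standard bilinear form. -/
def dualCode {n : ℕ} {F : Type*} [Field F] (C : Submodule F (Fin n → F)) :
    Set (Fin n → F) :=
  {x | ∀ c ∈ C, ∑ i, x i * c i = 0}

namespace Stmt17
set_option linter.unusedSectionVars false

open Finset
open scoped Classical

variable {F : Type*} [Field F] [Fintype F] [DecidableEq F] {n : ℕ}

/-- Support of a word as a Finset. -/
def suppF (c : Fin n → F) : Finset (Fin n) := Finset.univ.filter (fun i => c i ≠ 0)

lemma codeWt_eq (c : Fin n → F) : codeWt c = (suppF c).card := rfl

/-- Number of codewords with support exactly `S`. -/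
noncomputable def Ec (C : Submodule F (Fin n → F)) (S : Finset (Fin n)) : ℕ :=
  #(Finset.univ.filter fun c : Fin n → F => c ∈ C ∧ suppF c = S)

/-- Number of codewords with support contained in `S`. -/
noncomputable def Bc (C : Submodule F (Fin n → F)) (S : Finset (Fin n)) : ℕ :=
  #(Finset.univ.filter fun c : Fin n → F => c ∈ C ∧ suppF c ⊆ S)

lemma Bc_eq_sum (C : Submodule F (Fin n → F)) (T : Finset (Fin n)) :
    Bc C T = ∑ S ∈ T.powerset, Ec C S := by
  rw [Bc, card_eq_sum_card_fiberwise (f := fun c => suppF c) (t := T.powerset)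
    (fun c hc => by
      simp only [mem_coe, mem_filter, mem_univ, true_and] at hc
      exact mem_powerset.mpr hc.2)]
  refine Finset.sum_congr rfl fun S hS => ?_
  rw [mem_powerset] at hS
  rw [Ec]
  congr 1
  ext c
  simp only [mem_filter, mem_univ, true_and]
  constructor
  · rintro ⟨⟨h1, h2⟩, h3⟩; exact ⟨h1, h3⟩
  · rintro ⟨h1, h2⟩; exact ⟨⟨h1, h2 ▸ hS⟩, h2⟩

lemma Aw_eq_sum (C : Submodule F (Fin n → F)) (w : ℕ) :
    #(Finset.univ.filter fun c : Fin n → F => c ∈ C ∧ codeWt c = w)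
      = ∑ S ∈ Finset.powersetCard w Finset.univ, Ec C S := by
  rw [card_eq_sum_card_fiberwise (f := fun c => suppF c) (t := powersetCard w univ)
    (fun c hc => by
      simp only [mem_coe, mem_filter, mem_univ, true_and] at hc
      exact mem_powersetCard_univ.mpr hc.2)]
  refine Finset.sum_congr rfl fun S hS => ?_
  rw [mem_powersetCard_univ] at hS
  rw [Ec]
  congr 1
  ext c
  simp only [mem_filter, mem_univ, true_and]; simp only [codeWt_eq]
  constructor
  · rintro ⟨⟨h1, h2⟩, h3⟩; exact ⟨h1, h3⟩
  · rintro ⟨h1, h2⟩; exact ⟨⟨h1, h2 ▸ hS⟩, h2⟩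

lemma suppF_zero : suppF (0 : Fin n → F) = ∅ := by
  simp [suppF]

lemma suppF_eq_empty_iff {c : Fin n → F} : suppF c = ∅ ↔ c = 0 := by
  constructor
  · intro h
    funext i
    by_contra hi
    rw [Pi.zero_apply] at hi
    have : i ∈ suppF c := by simp [suppF, hi]
    simp [h] at this
  · rintro rfl; exact suppF_zero

lemma Ec_empty (C : Submodule F (Fin n → F)) : Ec C ∅ = 1 := by
  rw [Ec, Finset.card_eq_one]
  refine ⟨0, ?_⟩
  ext c
  simp only [mem_filter, mem_univ, true_and, mem_singleton, suppF_eq_empty_iff]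
  constructor
  · rintro ⟨-, h⟩; exact h
  · rintro rfl; exact ⟨C.zero_mem, rfl⟩

lemma Ec_small {d : ℕ} (C : Submodule F (Fin n → F))
    (hCd : ∀ c ∈ C, c ≠ 0 → d ≤ codeWt c)
    (S : Finset (Fin n)) (hne : S ≠ ∅) (hcard : S.card < d) : Ec C S = 0 := by
  rw [Ec, Finset.card_eq_zero, filter_eq_empty_iff]
  rintro c - ⟨hcC, hcs⟩
  have hc0 : c ≠ 0 := fun h => hne (by rw [← hcs, h, suppF_zero])
  have := hCd c hcC hc0
  rw [codeWt_eq, hcs] at this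
  omega


/-- The restriction-to-`U` map on the code. -/
noncomputable def resC (C : Submodule F (Fin n → F)) (U : Finset (Fin n)) :
    C →ₗ[F] (↥U → F) :=
  (LinearMap.funLeft F F (fun i : ↥U => (i : Fin n))).comp C.subtype

lemma resC_apply (C : Submodule F (Fin n → F)) (U : Finset (Fin n)) (c : C) (u : ↥U) :
    resC C U c u = (c : Fin n → F) u := rfl

lemma dual_eval {U : Finset (Fin n)} (f : Module.Dual F (↥U → F)) (y : ↥U → F) :
    f y = ∑ u : ↥U, y u * f (Pi.single u 1) := by
  conv_lhs => rw [← Finset.univ_sum_single y]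
  rw [map_sum]
  refine Finset.sum_congr rfl fun u _ => ?_
  have h : Pi.single u (y u) = y u • (Pi.single u (1 : F) : ↥U → F) := by
    funext v
    by_cases hv : v = u
    · subst hv; simp
    · simp [Pi.single_eq_of_ne hv]
  rw [h, map_smul, smul_eq_mul]

lemma resC_surj {k : ℕ} (C : Submodule F (Fin n → F))
    (hDd : ∀ x ∈ dualCode C, x ≠ 0 → k ≤ codeWt x)
    (U : Finset (Fin n)) (hU : U.card < k) :
    Function.Surjective (resC C U) := by
  by_contra hns
  have hlt : LinearMap.range (resC C U) < ⊤ :=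
    lt_top_iff_ne_top.mpr fun h => hns (LinearMap.range_eq_top.mp h)
  obtain ⟨f, hf0, hf⟩ := Submodule.exists_dual_map_eq_bot_of_lt_top hlt inferInstance
  set x : Fin n → F := fun i => if h : i ∈ U then f (Pi.single (⟨i, h⟩ : ↥U) 1) else 0 with hxdef
  have hxU : ∀ u : ↥U, x u = f (Pi.single u 1) := by
    rintro ⟨i, hi⟩
    simp only [hxdef, dif_pos hi]
  have hfrange : ∀ c : C, f (resC C U c) = 0 := by
    intro c
    have hmem : f (resC C U c) ∈ Submodule.map f (LinearMap.range (resC C U)) :=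
      Submodule.mem_map_of_mem ⟨c, rfl⟩
    rw [hf] at hmem
    exact (Submodule.mem_bot F).mp hmem
  have hxdual : x ∈ dualCode C := by
    intro c hc
    have h1 : ∑ i, x i * c i = ∑ i ∈ U, x i * c i := by
      refine (Finset.sum_subset (Finset.subset_univ U) fun i _ hi => ?_).symm
      simp [hxdef, hi]
    rw [h1, ← Finset.sum_coe_sort U (fun i => x i * c i)]
    have h2 : ∑ u : ↥U, x u * c u = f (resC C U ⟨c, hc⟩) := by
      rw [dual_eval f (resC C U ⟨c, hc⟩)]
      refine Finset.sum_congr rfl fun u _ => ?_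
      rw [hxU u, resC_apply, mul_comm]
    rw [h2, hfrange]
  have hxne : x ≠ 0 := by
    intro h0
    refine hf0 (LinearMap.ext fun y => ?_)
    rw [dual_eval f y, LinearMap.zero_apply]
    refine Finset.sum_eq_zero fun u _ => ?_
    rw [← hxU u, h0, Pi.zero_apply, mul_zero]
  have hwt : codeWt x ≤ U.card := by
    rw [codeWt]
    refine Finset.card_le_card fun i hi => ?_
    simp only [mem_filter, mem_univ, true_and] at hi
    by_contra hiU
    exact hi (by simp [hxdef, hiU])
  have := hDd x hxdual hxne
  omega

lemma Bc_large {k : ℕ} (C : Submodule F (Fin n → F))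
    (hdim : Module.finrank F C = k)
    (hDd : ∀ x ∈ dualCode C, x ≠ 0 → k ≤ codeWt x)
    (hkn : k ≤ n)
    (S : Finset (Fin n)) (hS : n - k < S.card) :
    Bc C S = Fintype.card F ^ (S.card - (n - k)) := by
  have hScard : S.card ≤ n := le_trans (card_le_univ S) (by simp)
  set U : Finset (Fin n) := Sᶜ with hUdef
  have hUcard : U.card = n - S.card := by
    rw [hUdef, card_compl, Fintype.card_fin]
  have hUk : U.card < k := by omega
  have hsurj := resC_surj C hDd U hUk
  -- identify Bc with the kernel cardinality
  have hBc : Bc C S = Nat.card (LinearMap.ker (resC C U)) := by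
    rw [Bc, ← Fintype.card_subtype, ← Nat.card_eq_fintype_card]
    refine Nat.card_congr ?_
    refine
      { toFun := fun c => ⟨⟨c.1, c.2.1⟩, ?_⟩
        invFun := fun x => ⟨x.1.1, x.1.2, ?_⟩
        left_inv := fun c => rfl
        right_inv := fun x => rfl }
    · have hc := c.2.2
      rw [LinearMap.mem_ker]
      funext u
      rw [resC_apply, Pi.zero_apply]
      by_contra hne
      have : (u : Fin n) ∈ suppF c.1 := by simp [suppF, hne]
      exact (Finset.mem_compl.mp u.2) (hc this)
    · intro i hi
      by_contra hiS
      have hiU : i ∈ U := Finset.mem_compl.mpr hiS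
      have h0 := x.2
      rw [LinearMap.mem_ker] at h0
      have := congrFun h0 ⟨i, hiU⟩
      rw [resC_apply, Pi.zero_apply] at this
      simp only [suppF, mem_filter, mem_univ, true_and] at hi
      exact hi this
  rw [hBc, Nat.card_eq_fintype_card, Module.card_eq_pow_finrank (K := F)]
  congr 1
  have hrn := LinearMap.finrank_range_add_finrank_ker (resC C U)
  rw [hdim, LinearMap.range_eq_top.mpr hsurj, finrank_top,
    Module.finrank_fintype_fun_eq_card, Fintype.card_coe] at hrn
  omega

lemma neg_one_pow_sub {p v : ℕ} (hv : v ≤ p) : (-1 : ℤ) ^ (p - v) = (-1) ^ p * (-1) ^ v := by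
  calc (-1 : ℤ) ^ (p - v) = (-1) ^ (p - v) * ((-1) ^ v * (-1) ^ v) := by
        rw [← pow_add, ← two_mul, pow_mul]; norm_num
    _ = ((-1) ^ (p - v) * (-1) ^ v) * (-1) ^ v := by ring
    _ = (-1) ^ p * (-1) ^ v := by rw [← pow_add, Nat.sub_add_cancel hv]

lemma inner_sum (U T : Finset (Fin n)) (hUT : U ⊆ T) :
    ∑ S ∈ T.powerset.filter (fun S => U ⊆ S), (-1 : ℤ) ^ (T.card - S.card)
      = if U = T then 1 else 0 := by
  have hbij : ∑ S ∈ T.powerset.filter (fun S => U ⊆ S), (-1 : ℤ) ^ (T.card - S.card)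
      = ∑ V ∈ (T \ U).powerset, (-1 : ℤ) ^ ((T \ U).card - V.card) := by
    refine Finset.sum_nbij' (fun S => S \ U) (fun V => V ∪ U) ?_ ?_ ?_ ?_ ?_
    · intro S hS
      simp only [mem_filter, mem_powerset] at hS
      exact mem_powerset.mpr (sdiff_subset_sdiff hS.1 Subset.rfl)
    · intro V hV
      rw [mem_powerset] at hV
      simp only [mem_filter, mem_powerset]
      constructor
      · exact union_subset (hV.trans (sdiff_subset)) hUT
      · exact subset_union_right
    · intro S hS
      simp only [mem_filter, mem_powerset] at hS
      exact sdiff_union_of_subset hS.2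
    · intro V hV
      rw [mem_powerset] at hV
      refine union_sdiff_cancel_right ?_
      exact disjoint_left.mpr fun a haV haU => (mem_sdiff.mp (hV haV)).2 haU
    · intro S hS
      simp only [mem_filter, mem_powerset] at hS
      congr 1
      rw [card_sdiff_of_subset hS.2, card_sdiff_of_subset hUT]
      have h1 := card_le_card hS.1
      have h2 := card_le_card hS.2
      omega
  rw [hbij]
  have htrans : ∑ V ∈ (T \ U).powerset, (-1 : ℤ) ^ ((T \ U).card - V.card)
      = (-1 : ℤ) ^ (T \ U).card * ∑ V ∈ (T \ U).powerset, (-1 : ℤ) ^ V.card := by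
    rw [Finset.mul_sum]
    refine Finset.sum_congr rfl fun V hV => ?_
    exact neg_one_pow_sub (card_le_card (mem_powerset.mp hV))
  rw [htrans, Finset.sum_powerset_neg_one_pow_card]
  by_cases h : U = T
  · subst h
    simp
  · have hne : T \ U ≠ ∅ := by
      intro h0
      exact h (Finset.Subset.antisymm hUT (sdiff_eq_empty_iff_subset.mp h0))
    rw [if_neg hne, if_neg h, mul_zero]

lemma inversion (C : Submodule F (Fin n → F)) (T : Finset (Fin n)) :
    (Ec C T : ℤ) = ∑ S ∈ T.powerset, (-1 : ℤ) ^ (T.card - S.card) * (Bc C S : ℤ) := by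
  have hswap : ∑ S ∈ T.powerset, (-1 : ℤ) ^ (T.card - S.card) * (Bc C S : ℤ)
      = ∑ U ∈ T.powerset, (Ec C U : ℤ) * (if U = T then 1 else 0) := by
    simp only [Bc_eq_sum, Nat.cast_sum, Finset.mul_sum]
    rw [Finset.sum_comm' (s := T.powerset) (t := fun S => S.powerset)
      (t' := T.powerset) (s' := fun U => T.powerset.filter (fun S => U ⊆ S)) ?_]
    · refine Finset.sum_congr rfl fun U hU => ?_
      rw [mem_powerset] at hU
      rw [← inner_sum U T hU, Finset.mul_sum]
      refine Finset.sum_congr rfl fun S hS => mul_comm _ _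
    · intro S U
      simp only [mem_filter, mem_powerset]
      constructor
      · rintro ⟨h1, h2⟩; exact ⟨⟨h1, h2⟩, h2.trans h1⟩
      · rintro ⟨⟨h1, h2⟩, h3⟩; exact ⟨h1, h2⟩
  rw [hswap]
  have : ∑ U ∈ T.powerset, (Ec C U : ℤ) * (if U = T then 1 else 0)
      = ∑ U ∈ T.powerset, (if U = T then (Ec C U : ℤ) else 0) := by
    refine Finset.sum_congr rfl fun U _ => ?_
    by_cases h : U = T <;> simp [h]
  rw [this, Finset.sum_ite_eq' T.powerset T (fun U => (Ec C U : ℤ)),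
    if_pos (mem_powerset.mpr Subset.rfl)]

lemma card_supersets (S : Finset (Fin n)) (w : ℕ) (hws : S.card ≤ w) :
    #((Finset.powersetCard w (Finset.univ : Finset (Fin n))).filter (fun T => S ⊆ T))
      = (n - S.card).choose (w - S.card) := by
  have : #((Finset.powersetCard w (Finset.univ : Finset (Fin n))).filter (fun T => S ⊆ T))
      = #(Finset.powersetCard (w - S.card) Sᶜ) := by
    refine Finset.card_nbij' (fun T => T \ S) (fun V => V ∪ S) ?_ ?_ ?_ ?_
    · intro T hT
      simp only [mem_coe, mem_filter, mem_powersetCard_univ] at hT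
      rw [mem_coe, mem_powersetCard]
      refine ⟨fun i hi => ?_, ?_⟩
      · rw [mem_sdiff] at hi
        exact Finset.mem_compl.mpr hi.2
      · rw [card_sdiff_of_subset hT.2, hT.1]
    · intro V hV
      rw [mem_coe, mem_powersetCard] at hV
      have hdisj : Disjoint V S := disjoint_left.mpr fun a haV haS =>
        (Finset.mem_compl.mp (hV.1 haV)) haS
      simp only [mem_coe, mem_filter, mem_powersetCard_univ]
      constructor
      · rw [card_union_of_disjoint hdisj, hV.2]; omega
      · exact subset_union_right
    · intro T hT
      simp only [mem_coe, mem_filter, mem_powersetCard_univ] at hT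
      exact sdiff_union_of_subset hT.2
    · intro V hV
      rw [mem_coe, mem_powersetCard] at hV
      refine union_sdiff_cancel_right (disjoint_left.mpr fun a haV haS =>
        (Finset.mem_compl.mp (hV.1 haV)) haS)
  rw [this, card_powersetCard, card_compl, Fintype.card_fin]

theorem main (k s : ℕ) (hk : 3 ≤ k) (hkn : k ≤ n) (hs1 : 1 ≤ s) (hsk : s ≤ k)
    (C : Submodule F (Fin n → F))
    (hdim : Module.finrank F C = k)
    (hCd : ∀ c ∈ C, c ≠ 0 → n - k ≤ codeWt c)
    (hCd' : ∃ c ∈ C, c ≠ 0 ∧ codeWt c = n - k)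
    (hDd : ∀ x ∈ dualCode C, x ≠ 0 → k ≤ codeWt x)
    (hDd' : ∃ x ∈ dualCode C, x ≠ 0 ∧ codeWt x = k) :
    ({c ∈ (C : Set (Fin n → F)) | codeWt c = n - k + s}.ncard : ℤ)
      = (n.choose (k - s) : ℤ) *
          ∑ j ∈ Finset.range s,
            (-1 : ℤ) ^ j * ((n - k + s).choose j : ℤ) * ((Fintype.card F : ℤ) ^ (s - j) - 1)
        + (-1 : ℤ) ^ s * (k.choose s : ℤ) *
            ({c ∈ (C : Set (Fin n → F)) | codeWt c = n - k}.ncard : ℤ) := by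
  classical
  -- n > k
  have hnk : k < n := by
    obtain ⟨c0, hc0C, hc0ne, hc0w⟩ := hCd'
    by_contra hle
    push_neg at hle
    have : n - k = 0 := by omega
    rw [this] at hc0w
    rw [codeWt_eq] at hc0w
    exact hc0ne (suppF_eq_empty_iff.mp (Finset.card_eq_zero.mp hc0w))
  -- ncard to Finset.card
  have hset : ∀ w' : ℕ, ({c ∈ (C : Set (Fin n → F)) | codeWt c = w'}.ncard)
      = #(Finset.univ.filter fun c : Fin n → F => c ∈ C ∧ codeWt c = w') := by
    intro w'
    rw [← Set.ncard_coe_finset]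
    congr 1
    ext c
    simp [Set.mem_setOf_eq]
  rw [hset, hset]
  -- per-S formula for Bc
  have hBcS : ∀ S : Finset (Fin n), (Bc C S : ℤ)
      = (if S.card ≤ n - k then 1 else (Fintype.card F : ℤ) ^ (S.card - (n - k)))
        + (if S.card = n - k then (Ec C S : ℤ) else 0) := by
    intro S
    rcases lt_trichotomy S.card (n - k) with h | h | h
    · rw [if_pos h.le, if_neg (by omega)]
      have hb : Bc C S = 1 := by
        rw [Bc_eq_sum,
          Finset.sum_eq_single_of_mem ∅ (Finset.mem_powerset.mpr (Finset.empty_subset S))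
            (fun U hU hUne => Ec_small C hCd U hUne
              (lt_of_le_of_lt (Finset.card_le_card (Finset.mem_powerset.mp hU)) h))]
        exact Ec_empty C
      rw [hb]
      norm_num
    · rw [if_pos h.le, if_pos h]
      have hSne : ∅ ≠ S := by
        intro h0
        rw [← h0] at h
        simp at h
        omega
      have hb : Bc C S = 1 + Ec C S := by
        rw [Bc_eq_sum,
          ← Finset.sum_subset (s₁ := ({∅, S} : Finset (Finset (Fin n))))
            (by
              intro U hU
              rw [Finset.mem_insert, Finset.mem_singleton] at hU
              rcases hU with rfl | rfl
              · exact Finset.mem_powerset.mpr (Finset.empty_subset S)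
              · exact Finset.mem_powerset.mpr Finset.Subset.rfl)
            (by
              intro U hU hUni
              rw [Finset.mem_insert, Finset.mem_singleton] at hUni
              push_neg at hUni
              refine Ec_small C hCd U hUni.1.ne_empty ?_
              have hss : U ⊂ S := Finset.ssubset_iff_subset_ne.mpr
                ⟨Finset.mem_powerset.mp hU, hUni.2⟩
              have := Finset.card_lt_card hss
              omega),
          Finset.sum_pair hSne, Ec_empty]
      rw [hb]
      push_cast
      ring
    · rw [if_neg (by omega), if_neg (by omega),
        Bc_large C hdim hDd hkn S h]
      push_cast
      ring
  -- per-T formula for Ec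
  have hEcT : ∀ T ∈ Finset.powersetCard (n - k + s) (Finset.univ : Finset (Fin n)),
      (Ec C T : ℤ)
        = (∑ i ∈ Finset.range (n - k + s + 1),
            (-1 : ℤ) ^ (n - k + s - i) * ((n - k + s).choose i : ℤ) *
              (if i ≤ n - k then 1 else (Fintype.card F : ℤ) ^ (i - (n - k))))
          + (-1 : ℤ) ^ s * ∑ S ∈ Finset.powersetCard (n - k) T, (Ec C S : ℤ) := by
    intro T hT
    have hTc : T.card = n - k + s := Finset.mem_powersetCard_univ.mp hT
    rw [inversion C T, hTc]
    have hsc : ∀ S ∈ T.powerset, (-1 : ℤ) ^ (n - k + s - S.card) * (Bc C S : ℤ)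
        = (-1 : ℤ) ^ (n - k + s - S.card) *
            (if S.card ≤ n - k then 1 else (Fintype.card F : ℤ) ^ (S.card - (n - k)))
          + (-1 : ℤ) ^ (n - k + s - S.card) *
            (if S.card = n - k then (Ec C S : ℤ) else 0) := by
      intro S _
      rw [hBcS S]
      ring
    rw [Finset.sum_congr rfl hsc, Finset.sum_add_distrib]
    congr 1
    · -- main term
      rw [Finset.sum_powerset T (fun S => (-1 : ℤ) ^ (n - k + s - S.card) *
          (if S.card ≤ n - k then 1 else (Fintype.card F : ℤ) ^ (S.card - (n - k)))), hTc]
      refine Finset.sum_congr rfl fun i hi => ?_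
      rw [Finset.sum_congr rfl (fun S hS => by
        rw [(Finset.mem_powersetCard.mp hS).2]),
        Finset.sum_const, Finset.card_powersetCard, hTc, nsmul_eq_mul]
      ring
    · -- Ec term
      rw [Finset.powersetCard_eq_filter, Finset.sum_filter, Finset.mul_sum]
      refine Finset.sum_congr rfl fun S hS => ?_
      by_cases hc : S.card = n - k
      · rw [if_pos hc, hc]
        have he : n - k + s - (n - k) = s := by omega
        rw [he]
      · rw [if_neg hc, mul_zero, mul_zero]
  -- sum over T
  have hAw : (#(Finset.univ.filter fun c : Fin n → F => c ∈ C ∧ codeWt c = n - k + s) : ℤ)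
      = (n.choose (n - k + s) : ℤ) *
          (∑ i ∈ Finset.range (n - k + s + 1),
            (-1 : ℤ) ^ (n - k + s - i) * ((n - k + s).choose i : ℤ) *
              (if i ≤ n - k then 1 else (Fintype.card F : ℤ) ^ (i - (n - k))))
        + (-1 : ℤ) ^ s * ∑ T ∈ Finset.powersetCard (n - k + s) (Finset.univ : Finset (Fin n)),
            ∑ S ∈ Finset.powersetCard (n - k) T, (Ec C S : ℤ) := by
    rw [Aw_eq_sum, Nat.cast_sum, Finset.sum_congr rfl hEcT, Finset.sum_add_distrib,
      Finset.sum_const, Finset.card_powersetCard, Finset.card_univ, Fintype.card_fin,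
      nsmul_eq_mul, ← Finset.mul_sum]
  -- double counting
  have hdc : ∑ T ∈ Finset.powersetCard (n - k + s) (Finset.univ : Finset (Fin n)),
      ∑ S ∈ Finset.powersetCard (n - k) T, (Ec C S : ℤ)
      = (k.choose s : ℤ) *
        ∑ S ∈ Finset.powersetCard (n - k) (Finset.univ : Finset (Fin n)), (Ec C S : ℤ) := by
    rw [Finset.sum_comm' (s := Finset.powersetCard (n - k + s) Finset.univ)
      (t := fun T => Finset.powersetCard (n - k) T)
      (t' := Finset.powersetCard (n - k) Finset.univ)
      (s' := fun S => (Finset.powersetCard (n - k + s) Finset.univ).filter fun T => S ⊆ T)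
      (by
        intro T S
        simp only [Finset.mem_powersetCard_univ, Finset.mem_powersetCard, Finset.mem_filter]
        constructor
        · rintro ⟨h1, h2, h3⟩; exact ⟨⟨h1, h2⟩, Finset.subset_univ S, h3⟩
        · rintro ⟨⟨h1, h2⟩, h3, h4⟩; exact ⟨h1, h2, h4⟩)]
    rw [Finset.mul_sum]
    refine Finset.sum_congr rfl fun S hS => ?_
    have hSm : S.card = n - k := Finset.mem_powersetCard_univ.mp hS
    rw [Finset.sum_const, card_supersets S (n - k + s) (by omega), nsmul_eq_mul, hSm]
    have e1 : n - (n - k) = k := by omega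
    have e2 : n - k + s - (n - k) = s := by omega
    rw [e1, e2]
  -- A_m
  have hAm : ∑ S ∈ Finset.powersetCard (n - k) (Finset.univ : Finset (Fin n)), (Ec C S : ℤ)
      = (#(Finset.univ.filter fun c : Fin n → F => c ∈ C ∧ codeWt c = n - k) : ℤ) := by
    rw [Aw_eq_sum, Nat.cast_sum]
  -- Phi simplification
  have hPhi : (∑ i ∈ Finset.range (n - k + s + 1),
        (-1 : ℤ) ^ (n - k + s - i) * ((n - k + s).choose i : ℤ) *
          (if i ≤ n - k then 1 else (Fintype.card F : ℤ) ^ (i - (n - k))))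
      = ∑ j ∈ Finset.range s,
          (-1 : ℤ) ^ j * ((n - k + s).choose j : ℤ) * ((Fintype.card F : ℤ) ^ (s - j) - 1) := by
    rw [← Finset.sum_range_reflect
      (fun i => (-1 : ℤ) ^ (n - k + s - i) * ((n - k + s).choose i : ℤ) *
        (if i ≤ n - k then 1 else (Fintype.card F : ℤ) ^ (i - (n - k)))) (n - k + s + 1)]
    have hstep : ∀ j ∈ Finset.range (n - k + s + 1),
        (-1 : ℤ) ^ (n - k + s - (n - k + s + 1 - 1 - j)) *
            ((n - k + s).choose (n - k + s + 1 - 1 - j) : ℤ) *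
            (if n - k + s + 1 - 1 - j ≤ n - k then 1
              else (Fintype.card F : ℤ) ^ (n - k + s + 1 - 1 - j - (n - k)))
          = (-1 : ℤ) ^ j * ((n - k + s).choose j : ℤ) *
              ((if s ≤ j then (1 : ℤ) else (Fintype.card F : ℤ) ^ (s - j)) - 1)
            + (-1 : ℤ) ^ j * ((n - k + s).choose j : ℤ) := by
      intro j hj
      rw [Finset.mem_range] at hj
      have hjw : j ≤ n - k + s := by omega
      have e1 : n - k + s + 1 - 1 - j = n - k + s - j := by omega
      have e2 : n - k + s - (n - k + s - j) = j := by omega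
      have e3 : (n - k + s).choose (n - k + s - j) = (n - k + s).choose j :=
        Nat.choose_symm hjw
      rw [e1, e2, e3]
      by_cases hc : s ≤ j
      · rw [if_pos (by omega), if_pos hc]
        ring
      · rw [if_neg (by omega), if_neg hc]
        have e4 : n - k + s - j - (n - k) = s - j := by omega
        rw [e4]
        ring
    rw [Finset.sum_congr rfl hstep, Finset.sum_add_distrib,
      Int.alternating_sum_range_choose, if_neg (by omega : ¬ n - k + s = 0), add_zero]
    rw [show (∑ j ∈ Finset.range s,
          (-1 : ℤ) ^ j * ((n - k + s).choose j : ℤ) * ((Fintype.card F : ℤ) ^ (s - j) - 1))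
        = ∑ j ∈ Finset.range s, (-1 : ℤ) ^ j * ((n - k + s).choose j : ℤ) *
            ((if s ≤ j then (1 : ℤ) else (Fintype.card F : ℤ) ^ (s - j)) - 1) from
      Finset.sum_congr rfl fun j hj => by
        rw [Finset.mem_range] at hj
        rw [if_neg (by omega : ¬ s ≤ j)]]
    refine (Finset.sum_subset (fun j hj => ?_) (fun j hj hjs => ?_)).symm
    · rw [Finset.mem_range] at hj ⊢
      omega
    · rw [Finset.mem_range] at hjs
      rw [if_pos (by omega : s ≤ j)]
      simp
  rw [hAw, hdc, hAm, hPhi]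
  have hchoose : (n.choose (k - s) : ℤ) = (n.choose (n - k + s) : ℤ) := by
    have h1 : k - s = n - (n - k + s) := by omega
    have h2 := Nat.choose_symm (by omega : n - k + s ≤ n)
    rw [h1, h2]
  rw [hchoose]
  ring

end Stmt17

theorem stmt17 {F : Type*} [Field F] [Fintype F] [DecidableEq F]
    (n k s : ℕ) (hk : 3 ≤ k) (hkn : k ≤ n) (hs1 : 1 ≤ s) (hsk : s ≤ k)
    (C : Submodule F (Fin n → F))
    (hdim : Module.finrank F C = k)
    (hCd : ∀ c ∈ C, c ≠ 0 → n - k ≤ codeWt c)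
    (hCd' : ∃ c ∈ C, c ≠ 0 ∧ codeWt c = n - k)
    (hDd : ∀ x ∈ dualCode C, x ≠ 0 → k ≤ codeWt x)
    (hDd' : ∃ x ∈ dualCode C, x ≠ 0 ∧ codeWt x = k) :
    ({c ∈ (C : Set (Fin n → F)) | codeWt c = n - k + s}.ncard : ℤ)
      = (n.choose (k - s) : ℤ) *
          ∑ j ∈ Finset.range s,
            (-1 : ℤ) ^ j * ((n - k + s).choose j : ℤ) * ((Fintype.card F : ℤ) ^ (s - j) - 1)
        + (-1 : ℤ) ^ s * (k.choose s : ℤ) *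
            ({c ∈ (C : Set (Fin n → F)) | codeWt c = n - k}.ncard : ℤ) := by
  exact Stmt17.main k s hk hkn hs1 hsk C hdim hCd hCd' hDd hDd'
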